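/- Let d ≥ 1, e = 2^d, and let λ_d = (M_d w_0)(M_d w_1)···(M_d w_{2^e−1}) be the concatenation over the lexicographic enumeration w_0, ..., w_{2^e−1} of F_2^e. Fix a binary word a of length d+e with complement of a_1...a_d equal to a_{e+1}...a_{e+d}, and fix an index z with d ≤ z ≤ e and a_z = 0. Then there exists a unique even index n such that a occurs in λ_d starting at the position that aligns a_z with the last (e-th) symbol of the block M_d w_n; namely, M_d w_n equals the word (complement of a_{z+1}...a_e) followed by a_1...a_z. -/

import Mathlib

open Matrix

/-- The Pascal-triangle matrix over `F₂`: `M 0 = (1)`,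
`M (d+1) = [[M d, M d],[0, M d]]`. -/
def pascalM : (d : ℕ) → Matrix (Fin (2^d)) (Fin (2^d)) (ZMod 2)
  | 0 => fun _ _ => 1
  | d+1 =>
    Matrix.reindex (finSumFinEquiv.trans (finCongr (by rw [pow_succ]; ring)))
      (finSumFinEquiv.trans (finCongr (by rw [pow_succ]; ring)))
      (Matrix.fromBlocks (pascalM d) (pascalM d) 0 (pascalM d))

/-- The `n`-th vector of `F₂^e` in lexicographic order (as binary words,
index `0` being the most significant bit). -/
def vecOf (e n : ℕ) : Fin e → ZMod 2 := fun i => ((n / 2^(e - 1 - i.val)) % 2 : ℕ)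

/-- Rotation moving the last entry of a vector to the front. -/
def rot {e : ℕ} (v : Fin e → ZMod 2) : Fin e → ZMod 2 :=
  fun i => v ⟨(i.val + (e - 1)) % e, Nat.mod_lt _ i.pos⟩

/-- `Suitable e ν` : the tuple `(ν 0, …, ν (e-1))` (representing `n_1,…,n_e`)
satisfies `n_e = 0` and `n_{i+1} ≤ n_i ≤ n_{i+1}+1`. -/
def Suitable (e : ℕ) (ν : ℕ → ℕ) : Prop :=
  ν (e - 1) = 0 ∧ ∀ j, j + 2 ≤ e → ν (j+1) ≤ ν j ∧ ν j ≤ ν (j+1) + 1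

/-- The matrix `M_d^ν`, whose `j`-th column is the `j`-th column of `M_d`
rotated `ν j` times. -/
def pascalMnu (d : ℕ) (ν : ℕ → ℕ) : Matrix (Fin (2^d)) (Fin (2^d)) (ZMod 2) :=
  fun i j => (rot^[ν j.val] (fun r => pascalM d r j)) i

/-- The `d`-th Levin block `λ_d = (M_d w_0)(M_d w_1)⋯(M_d w_{2^e-1})`
as an `ℕ`-indexed word (`e = 2^d`). -/
def levinBlock (d : ℕ) (p : ℕ) : ZMod 2 :=
  (pascalM d).mulVec (vecOf (2^d) (p / 2^d)) ⟨p % 2^d, Nat.mod_lt _ (Nat.two_pow_pos d)⟩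

/-- Length of the `d`-th Levin block: `2^d · 2^(2^d)`. -/
def levinLen (d : ℕ) : ℕ := 2^d * 2^(2^d)

/-- The binary expansion of Levin's number `λ = λ₀λ₁λ₂⋯`. -/
def levinWord (p : ℕ) : ZMod 2 := go 0 p
where
  go (d p : ℕ) : ZMod 2 :=
    if p < levinLen d then levinBlock d p else go (d+1) (p - levinLen d)
  termination_by p
  decreasing_by
    
    have h1 : 0 < levinLen d :=
      Nat.mul_pos (Nat.two_pow_pos d) (Nat.two_pow_pos (2^d))
    omega

/-- Levin's number as a real number in `[0,1)`. -/
noncomputable def levinReal : ℝ := ∑' p : ℕ, ((levinWord p).val : ℝ) / 2^(p+1)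

/-- Distance from a real number to the nearest integer. -/
noncomputable def torusDist (y : ℝ) : ℝ := |y - round y|

/-- The pair-correlation counting function
`F_N(s) = (1/N) · #{(i,j) : 1 ≤ i ≠ j ≤ N, ‖x_i − x_j‖ < s/N}`. -/
noncomputable def pairF (x : ℕ → ℝ) (N : ℕ) (s : ℝ) : ℝ :=
  (Nat.card {p : ℕ × ℕ // 1 ≤ p.1 ∧ p.1 ≤ N ∧ 1 ≤ p.2 ∧ p.2 ≤ N ∧ p.1 ≠ p.2 ∧
      torusDist (x p.1 - x p.2) < s / N} : ℝ) / N

/-- Poissonian pair correlations: `F_N(s) → 2s` for every `s ≥ 0`. -/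
def PoissonianPC (x : ℕ → ℝ) : Prop :=
  ∀ s : ℝ, 0 ≤ s → Filter.Tendsto (fun N => pairF x N s) Filter.atTop (nhds (2*s))

lemma two_pow_succ_lem (d : ℕ) : 2^(d+1) = 2^d + 2^d := by rw [pow_succ]; ring

lemma pascal_sq (d : ℕ) : pascalM d * pascalM d = 1 := by
  induction d with
  | zero =>
      ext i j
      fin_cases i; fin_cases j
      simp [pascalM, Matrix.mul_apply]
      decide
  | succ d ih =>
      rw [pascalM]
      rw [Matrix.reindex_apply, Matrix.submatrix_mul_equiv, Matrix.fromBlocks_multiply]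
      have h2 : (1 + 1 : Matrix (Fin (2^d)) (Fin (2^d)) (ZMod 2)) = 0 := by
        ext i j
        by_cases h : i = j <;> simp [Matrix.one_apply, h] <;> decide
      simp [ih, h2, Matrix.fromBlocks_one]
      exact Matrix.submatrix_one_equiv ((finCongr _).trans finSumFinEquiv.symm)

lemma pascalM_succ_apply (d : ℕ) (i j : Fin (2^(d+1))) :
    pascalM (d+1) i j =
      if hi : i.val < 2^d then
        (if hj : j.val < 2^d then pascalM d ⟨i.val, hi⟩ ⟨j.val, hj⟩
         else pascalM d ⟨i.val, hi⟩
            ⟨j.val - 2^d, by have := j.isLt; have h2 := two_pow_succ_lem d; omega⟩)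
      else
        (if hj : j.val < 2^d then 0
         else pascalM d ⟨i.val - 2^d, by have := i.isLt; have h2 := two_pow_succ_lem d; omega⟩
            ⟨j.val - 2^d, by have := j.isLt; have h2 := two_pow_succ_lem d; omega⟩) := by
  rw [pascalM, Matrix.reindex_apply, Matrix.submatrix_apply]
  simp only [Equiv.symm_trans_apply, finCongr_symm, finCongr_apply]
  simp [finSumFinEquiv, Fin.addCases, Matrix.fromBlocks, Fin.castLT, Fin.subNat]
  split_ifs <;> rfl

lemma pascal_lastCol : ∀ (d : ℕ) (i j : Fin (2^d)), j.val = 2^d - 1 → pascalM d i j = 1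
  | 0, i, j, hj => rfl
  | d+1, i, j, hj => by
      have hp := two_pow_succ_lem d
      have h1 : 0 < 2^d := Nat.two_pow_pos d
      rw [pascalM_succ_apply]
      have hj' : ¬ (j.val < 2^d) := by omega
      have hj2 : j.val - 2^d = 2^d - 1 := by omega
      by_cases hi : i.val < 2^d
      · rw [dif_pos hi, dif_neg hj']
        exact pascal_lastCol d _ _ hj2
      · rw [dif_neg hi, dif_neg hj']
        exact pascal_lastCol d _ _ hj2

lemma pascal_lastRow : ∀ (d : ℕ) (i j : Fin (2^d)), i.val = 2^d - 1 →
    pascalM d i j = if j.val = 2^d - 1 then 1 else 0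
  | 0, i, j, hi => by
      have : j.val = 0 := by omega
      simp [pascalM, this]
  | d+1, i, j, hi => by
      have hp := two_pow_succ_lem d
      have h1 : 0 < 2^d := Nat.two_pow_pos d
      rw [pascalM_succ_apply]
      have hi' : ¬ (i.val < 2^d) := by omega
      rw [dif_neg hi']
      by_cases hj : j.val < 2^d
      · rw [dif_pos hj, if_neg (by omega)]
      · rw [dif_neg hj, pascal_lastRow d _ _ (show i.val - 2^d = 2^d - 1 by omega)]
        simp only []
        split_ifs with h2 h3 <;> first | rfl | (exfalso; omega)

lemma vecOf_inj {e n m : ℕ} (hn : n < 2^e) (hm : m < 2^e) (h : vecOf e n = vecOf e m) :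
    n = m := by
  apply Nat.eq_of_testBit_eq
  intro k
  by_cases hk : k < e
  · have := congrFun h ⟨e - 1 - k, by omega⟩
    simp only [vecOf] at this
    have he : e - 1 - (e - 1 - k) = k := by omega
    rw [he] at this
    have h1 : n / 2^k % 2 < 2 := Nat.mod_lt _ (by norm_num)
    have h2 : m / 2^k % 2 < 2 := Nat.mod_lt _ (by norm_num)
    have h3 := congrArg ZMod.val this
    rw [ZMod.val_cast_of_lt h1, ZMod.val_cast_of_lt h2] at h3
    rename' h3 => this
    rw [Nat.testBit_eq_decide_div_mod_eq, Nat.testBit_eq_decide_div_mod_eq, this]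
  · rw [Nat.testBit_eq_false_of_lt (lt_of_lt_of_le hn (Nat.pow_le_pow_right (by norm_num) (by omega))),
        Nat.testBit_eq_false_of_lt (lt_of_lt_of_le hm (Nat.pow_le_pow_right (by norm_num) (by omega)))]

lemma vecOf_surj (e : ℕ) (w : Fin e → ZMod 2) : ∃ n < 2^e, vecOf e n = w := by
  have hinj : Function.Injective (fun n : Fin (2^e) => vecOf e n.val) := by
    intro n m h
    exact Fin.ext (vecOf_inj n.isLt m.isLt h)
  have hcard : Fintype.card (Fin (2^e)) = Fintype.card (Fin e → ZMod 2) := by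
    simp [ZMod.card]
  have hbij := (Fintype.bijective_iff_injective_and_card _).2 ⟨hinj, hcard⟩
  obtain ⟨n, hn⟩ := hbij.2 w
  exact ⟨n.val, n.isLt, hn⟩

lemma vecOf_last (e n : ℕ) (he : 0 < e) (i : Fin e) (hi : i.val = e - 1) :
    vecOf e n i = ((n % 2 : ℕ) : ZMod 2) := by
  simp [vecOf, hi]

lemma vecOf_succ (e n : ℕ) (hn : n % 2 = 0) (i : Fin e) :
    vecOf e (n+1) i = vecOf e n i + (if i.val = e - 1 then 1 else 0) := by
  by_cases hi : i.val = e - 1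
  · rw [if_pos hi, vecOf_last e (n+1) i.pos i hi, vecOf_last e n i.pos i hi]
    have h1 : (n+1) % 2 = 1 := by omega
    rw [hn, h1]
    simp
  · rw [if_neg hi, add_zero]
    simp only [vecOf]
    have hk : 1 ≤ e - 1 - i.val := by have := i.isLt; have := i.pos; omega
    obtain ⟨k', hk'⟩ : ∃ k', e - 1 - i.val = k' + 1 := ⟨e - 1 - i.val - 1, by omega⟩
    rw [hk']
    have hdiv : (n+1) / 2^(k'+1) = n / 2^(k'+1) := by
      rw [pow_succ, mul_comm, ← Nat.div_div_eq_div_mul, ← Nat.div_div_eq_div_mul]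
      congr 1
      omega
    rw [hdiv]

lemma pascal_mulVec_cancel (d : ℕ) (v : Fin (2^d) → ZMod 2) :
    (pascalM d).mulVec ((pascalM d).mulVec v) = v := by
  rw [Matrix.mulVec_mulVec, pascal_sq, Matrix.one_mulVec]

lemma pascal_mulVec_last (d : ℕ) (w : Fin (2^d) → ZMod 2) (i : Fin (2^d))
    (hi : i.val = 2^d - 1) : (pascalM d).mulVec w i = w i := by
  have hrow : ∀ j, pascalM d i j = if j = i then 1 else 0 := by
    intro j
    rw [pascal_lastRow d i j hi]
    by_cases h : j = i
    · simp [h, hi]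
    · rw [if_neg (by rw [← hi]; exact fun hc => h (Fin.ext hc)), if_neg h]
  simp [Matrix.mulVec, dotProduct, hrow, ite_mul]

lemma pascal_mulVec_succ (d n : ℕ) (hn : n % 2 = 0) :
    (pascalM d).mulVec (vecOf (2^d) (n+1)) =
      fun i => (pascalM d).mulVec (vecOf (2^d) n) i + 1 := by
  have hlt : 2^d - 1 < 2^d := by have := Nat.two_pow_pos d; omega
  have hv : vecOf (2^d) (n+1) = vecOf (2^d) n + Pi.single (⟨2^d - 1, hlt⟩ : Fin (2^d)) 1 := by
    ext i
    rw [vecOf_succ _ _ hn]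
    congr 1
    rw [Pi.single_apply]
    congr 1
    simp [Fin.ext_iff, eq_comm]
  rw [hv, Matrix.mulVec_add, Matrix.mulVec_single]
  ext i
  simp [pascal_lastCol d i ⟨2^d - 1, hlt⟩ rfl]

lemma levinBlock_eq (d n r : ℕ) (hr : r < 2^d) :
    levinBlock d (n * 2^d + r) = (pascalM d).mulVec (vecOf (2^d) n) ⟨r, hr⟩ := by
  have h := Nat.two_pow_pos d
  have h1 : (n * 2^d + r) / 2^d = n := by
    rw [add_comm, Nat.add_mul_div_right _ _ h, Nat.div_eq_of_lt hr, zero_add]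
  have h2 : (n * 2^d + r) % 2^d = r := by
    rw [add_comm, Nat.add_mul_mod_self_right, Nat.mod_eq_of_lt hr]
  simp only [levinBlock, h1, h2]


lemma zmod2_sub_add : ∀ x : ZMod 2, (1 - x) + 1 = x := by decide
lemma zmod2_one_sub : ∀ x : ZMod 2, 1 - x = x + 1 := by decide

/-- given a word `a` of length `d + e` (`e = 2^d`) whose first
`d` letters are complementary to its last `d` letters, and an index `z` with
`d ≤ z ≤ e` and `a_z = 0`, there is a unique even `n` such that `a` occurs in
`λ_d` at the position aligning `a_z` with the last symbol of the block
`M_d w_n`; namely `M_d w_n = (complement of a_{z+1}…a_e) a_1…a_z`. -/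
theorem unique_occurrence_at_alignment (d z : ℕ) (hd : 1 ≤ d)
    (a : Fin (d + 2^d) → ZMod 2)
    (hcomp : ∀ i : Fin d,
      a ⟨2^d + i.val, by rw [Nat.add_comm d (2^d)]; exact Nat.add_lt_add_left i.isLt (2^d)⟩ =
        1 - a ⟨i.val, Nat.lt_of_lt_of_le i.isLt (Nat.le_add_right d (2^d))⟩)
    (hz1 : d ≤ z) (hz2 : z ≤ 2^d)
    (haz : a ⟨z - 1, by omega⟩ = 0) :
    ∃! n : ℕ, Even n ∧ n < 2^(2^d) ∧
      (∀ t : Fin (d + 2^d),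
        levinBlock d (n * 2^d + (2^d - z) + t.val) = a t) ∧
      (pascalM d).mulVec (vecOf (2^d) n) = fun i : Fin (2^d) =>
        if h : i.val < 2^d - z then
          1 - a ⟨z + i.val, by omega⟩
        else
          a ⟨i.val - (2^d - z), by have := i.isLt; omega⟩ := by
  have hE : 0 < 2^d := Nat.two_pow_pos d
  have hde : d ≤ 2^d := Nat.le_of_lt Nat.lt_two_pow_self
  set v : Fin (2^d) → ZMod 2 := fun i : Fin (2^d) =>
        if h : i.val < 2^d - z then
          1 - a ⟨z + i.val, by omega⟩
        else
          a ⟨i.val - (2^d - z), by have := i.isLt; omega⟩ with hv_def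
  have hv1 : ∀ (r : ℕ) (hr : r < 2^d) (h : r < 2^d - z),
      v ⟨r, hr⟩ = 1 - a ⟨z + r, by omega⟩ := by
    intro r hr h
    show (if h : r < 2^d - z then 1 - a ⟨z + r, by omega⟩
      else a ⟨r - (2^d - z), by omega⟩) = _
    rw [dif_pos h]
  have hv2 : ∀ (r : ℕ) (hr : r < 2^d) (h : ¬ r < 2^d - z),
      v ⟨r, hr⟩ = a ⟨r - (2^d - z), by omega⟩ := by
    intro r hr h
    show (if h : r < 2^d - z then 1 - a ⟨z + r, by omega⟩
      else a ⟨r - (2^d - z), by omega⟩) = _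
    rw [dif_neg h]
  obtain ⟨n, hn_lt, hw⟩ := vecOf_surj (2^d) ((pascalM d).mulVec v)
  have hMv : (pascalM d).mulVec (vecOf (2^d) n) = v := by
    rw [hw]; exact pascal_mulVec_cancel d v
  have hlt : 2^d - 1 < 2^d := by omega
  -- parity
  have hvlast : v ⟨2^d - 1, hlt⟩ = 0 := by
    rw [hv2 _ hlt (by omega)]
    rw [show (⟨2^d - 1 - (2^d - z), by omega⟩ : Fin (d + 2^d)) = ⟨z - 1, by omega⟩ from
      Fin.ext (by dsimp; omega)]
    exact haz
  have hwlast : vecOf (2^d) n ⟨2^d - 1, hlt⟩ = 0 := by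
    have h := pascal_mulVec_last d (vecOf (2^d) n) ⟨2^d - 1, hlt⟩ rfl
    rw [← h, hMv]
    exact hvlast
  have hn2 : n % 2 = 0 := by
    have h := vecOf_last (2^d) n hE ⟨2^d - 1, hlt⟩ rfl
    rw [hwlast] at h
    have h2 : n % 2 < 2 := Nat.mod_lt _ (by norm_num)
    have h3 := congrArg ZMod.val h.symm
    rwa [ZMod.val_cast_of_lt h2, ZMod.val_zero] at h3
  -- occurrence
  have hocc : ∀ t : Fin (d + 2^d),
      levinBlock d (n * 2^d + (2^d - z) + t.val) = a t := by
    intro t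
    have ht := t.isLt
    by_cases h : t.val < z
    · have harr : n * 2^d + (2^d - z) + t.val = n * 2^d + ((2^d - z) + t.val) := by omega
      have hb : (2^d - z) + t.val < 2^d := by omega
      rw [harr, levinBlock_eq d n _ hb, hMv, hv2 _ hb (by omega)]
      exact congrArg a (Fin.ext (by dsimp; omega))
    · push_neg at h
      have hdist : (n+1) * 2^d = n * 2^d + 2^d := by ring
      have harr : n * 2^d + (2^d - z) + t.val = (n+1) * 2^d + (t.val - z) := by omega
      have hb : t.val - z < 2^d := by omega
      rw [harr, levinBlock_eq d (n+1) _ hb, pascal_mulVec_succ d n hn2]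
      show (pascalM d).mulVec (vecOf (2^d) n) ⟨t.val - z, hb⟩ + 1 = a t
      rw [hMv]
      by_cases ht2 : t.val < 2^d
      · rw [hv1 _ hb (by omega), zmod2_sub_add]
        exact congrArg a (Fin.ext (by dsimp; omega))
      · push_neg at ht2
        rw [hv2 _ hb (by omega)]
        have hc := hcomp ⟨t.val - 2^d, by omega⟩
        dsimp only at hc
        rw [zmod2_one_sub] at hc
        have e1 : a t = a ⟨2^d + (t.val - 2^d), by omega⟩ :=
          congrArg a (Fin.ext (by dsimp; omega))
        have e2 : a ⟨t.val - z - (2^d - z), by omega⟩ = a ⟨t.val - 2^d, by omega⟩ :=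
          congrArg a (Fin.ext (by dsimp; omega))
        rw [e1, hc, e2]
  refine ⟨n, ⟨Nat.even_iff.2 hn2, hn_lt, hocc, hMv⟩, ?_⟩
  rintro m ⟨-, hmlt, -, hMv'⟩
  have hkey : vecOf (2^d) m = vecOf (2^d) n := by
    have h := congrArg ((pascalM d).mulVec) (hMv'.trans hMv.symm)
    rwa [pascal_mulVec_cancel, pascal_mulVec_cancel] at h
  exact vecOf_inj hmlt hn_lt hkey
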